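/- For every vertex subset S ⊆ V and all real parameters β and λ, the following identity holds: Σ_{v ∈ V \ S} deg(v) + e(S, V \ S) + (β − λ)·|S ∩ Sp| + (β + λ)·(|S| − |S ∩ Sp|) = (2m − λ·np) + β·|S| − (2·e(S) − λ·(|S| + np − 2·|S ∩ Sp|)), where deg(v) denotes the degree of v in G and e(S, V \ S) denotes the number of edges with one endpoint in S and the other in V \ S. (This is the cost of the s–t cut (S ∪ {s}, (V \ S) ∪ {t}) in the auxiliary flow network for FADSG-II, and equals (2m − λ·np) + β|S| − p2(S, λ).) -/

import Mathlib

open Finset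

/-- Number of edges of `G` with both endpoints in `S`. -/
def edgesIn {V : Type*} [Fintype V] [DecidableEq V] (G : SimpleGraph V)
    [DecidableRel G.Adj] (S : Finset V) : ℕ :=
  (G.edgeFinset.filter (fun e => ∀ v ∈ e, v ∈ S)).card

/-- Number of edges of `G` with one endpoint in `S` and the other in `V \ S`. -/
def cutEdges {V : Type*} [Fintype V] [DecidableEq V] (G : SimpleGraph V)
    [DecidableRel G.Adj] (S : Finset V) : ℕ :=
  (G.edgeFinset.filter (fun e => (∃ v ∈ e, v ∈ S) ∧ (∃ v ∈ e, v ∉ S))).card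

lemma degSum_eq_dartCount {V : Type*} [Fintype V] [DecidableEq V] (G : SimpleGraph V)
    [DecidableRel G.Adj] (S : Finset V) :
    ∑ v ∈ Sᶜ, G.degree v = #(univ.filter fun d : G.Dart => d.fst ∈ Sᶜ) := by
  rw [card_eq_sum_card_fiberwise (f := fun d : G.Dart => d.fst) (s := univ.filter fun d : G.Dart => d.fst ∈ Sᶜ) (t := Sᶜ) (fun d hd => (mem_filter.1 (mem_coe.1 hd)).2)]
  refine Finset.sum_congr rfl fun v hv => ?_
  rw [← SimpleGraph.dart_fst_fiber_card_eq_degree]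
  congr 1
  ext d
  simp only [mem_filter, mem_univ, true_and]
  exact ⟨fun h => ⟨h ▸ hv, h⟩, fun h => h.2⟩

lemma key {V : Type*} [Fintype V] [DecidableEq V] (G : SimpleGraph V)
    [DecidableRel G.Adj] (S : Finset V) :
    (∑ v ∈ Sᶜ, G.degree v) + cutEdges G S + 2 * edgesIn G S
      = 2 * G.edgeFinset.card := by
  rw [degSum_eq_dartCount,
    card_eq_sum_card_fiberwise (f := fun d : G.Dart => d.edge) (t := G.edgeFinset)
      (fun d hd => by simpa using d.edge_mem),
    cutEdges, edgesIn, card_filter, card_filter, Finset.mul_sum, ← Finset.sum_add_distrib,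
    ← Finset.sum_add_distrib]
  rw [show (2 : ℕ) * G.edgeFinset.card = ∑ _e ∈ G.edgeFinset, 2 by simp [mul_comm]]
  refine Finset.sum_congr rfl fun e he => ?_
  rw [SimpleGraph.mem_edgeFinset] at he
  induction e with
  | h u v =>
    have hadj : G.Adj u v := he
    have hne : u ≠ v := hadj.ne
    let d : G.Dart := ⟨(u, v), hadj⟩
    have hfib : (univ.filter fun d' : G.Dart => d'.fst ∈ Sᶜ ∧ d'.edge = s(u, v))
        = ({d, d.symm} : Finset G.Dart).filter fun d' => d'.fst ∈ Sᶜ := by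
      rw [← d.edge_fiber]
      ext d'
      simp only [mem_filter, mem_univ, true_and, Set.mem_toFinset]
      constructor
      · rintro ⟨h1, h2⟩; exact ⟨h2, h1⟩
      · rintro ⟨h1, h2⟩; exact ⟨h2, h1⟩
    rw [filter_filter, hfib, filter_insert, filter_singleton]
    have hd1 : d.fst = u := rfl
    have hd2 : d.symm.fst = v := rfl
    rw [hd1, hd2]
    by_cases hu : u ∈ S <;> by_cases hv : v ∈ S <;>
      simp [hu, hv, Sym2.mem_iff, hne, hne.symm, card_insert_of_notMem,
        (by simp [SimpleGraph.Dart.ext_iff, Prod.ext_iff, hne] :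
          d ≠ d.symm)] <;> omega

/-- cost of the s–t cut `(S ∪ {s}, (V \ S) ∪ {t})` in the auxiliary
flow network for FADSG-II:
`Σ_{v ∉ S} deg(v) + e(S, V \ S) + (β - λ)|S ∩ Sp| + (β + λ)(|S| - |S ∩ Sp|)
  = (2m - λ np) + β|S| - (2 e(S) - λ(|S| + np - 2|S ∩ Sp|))
  = (2m - λ np) + β|S| - p2(S, λ)`. -/
theorem stmt11 {V : Type*} [Fintype V] [DecidableEq V] (G : SimpleGraph V)
    [DecidableRel G.Adj] (Sp S : Finset V) (β lam : ℝ) :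
    (∑ v ∈ Sᶜ, (G.degree v : ℝ)) + (cutEdges G S : ℝ)
        + (β - lam) * ((S ∩ Sp).card : ℝ)
        + (β + lam) * ((S.card : ℝ) - ((S ∩ Sp).card : ℝ)) =
      (2 * (G.edgeFinset.card : ℝ) - lam * (Sp.card : ℝ)) + β * (S.card : ℝ)
        - (2 * (edgesIn G S : ℝ)
            - lam * ((S.card : ℝ) + (Sp.card : ℝ) - 2 * ((S ∩ Sp).card : ℝ))) := by
  have h := key G S
  have h' : (∑ v ∈ Sᶜ, (G.degree v : ℝ)) + (cutEdges G S : ℝ)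
      = 2 * (G.edgeFinset.card : ℝ) - 2 * (edgesIn G S : ℝ) := by
    have hc := congrArg (Nat.cast : ℕ → ℝ) h
    push_cast at hc
    linarith
  linear_combination h'
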